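/- Newman's theorem on rational approximation of the absolute value: there exists a constant C > 0 such that for every n ≥ 1 there is a rational function r_n of type (n, n) with real coefficients satisfying sup_{x ∈ [−1,1]} | |x| − r_n(x) | = O(e^{−C√n}) as n → ∞; that is, rational approximation to f(x) = |x| on [−1,1] achieves root-exponential convergence. -/
import Mathlib


open Polynomial Finset

noncomputable def nxi (m : ℕ) : ℝ := Real.exp (-(1 / Real.sqrt m))

noncomputable def nF (m : ℕ) (x : ℝ) : ℝ := ∏ k ∈ Finset.range m, (x + (nxi m) ^ k)

lemma nxi_pos (m : ℕ) : 0 < nxi m := Real.exp_pos _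

lemma nxi_le_one (m : ℕ) : nxi m ≤ 1 := by
  rw [nxi, ← Real.exp_zero]
  apply Real.exp_le_exp.2
  simp [div_nonneg, Real.sqrt_nonneg]

lemma nF_pos {m : ℕ} {x : ℝ} (hx : 0 ≤ x) : 0 < nF m x := by
  apply Finset.prod_pos
  intro k _
  have := pow_pos (nxi_pos m) k
  linarith

noncomputable def nrho (m : ℕ) (x : ℝ) (k : ℕ) : ℝ :=
  min (x / (nxi m) ^ k) ((nxi m) ^ k / x)

lemma nrho_nonneg {m : ℕ} {x : ℝ} (hx : 0 < x) (k : ℕ) : 0 ≤ nrho m x k := by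
  have := nxi_pos m
  apply le_min <;> positivity

lemma factor_bound {m : ℕ} {x : ℝ} (hx : 0 < x) (k : ℕ) :
    |(nxi m) ^ k - x| ≤ Real.exp (-(nrho m x k)) * ((nxi m) ^ k + x) := by
  set a := (nxi m) ^ k with ha
  have hap : 0 < a := pow_pos (nxi_pos m) k
  have h1 : 1 - nrho m x k ≤ Real.exp (-(nrho m x k)) := by
    have := Real.add_one_le_exp (-(nrho m x k)); linarith
  have key : |a - x| ≤ (1 - nrho m x k) * (a + x) := by
    rcases le_total a x with h | h
    · have habs : |a - x| = x - a := by rw [abs_sub_comm, abs_of_nonneg (by linarith)]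
      have hrle : nrho m x k ≤ a / x := min_le_right _ _
      have : nrho m x k * (a + x) ≤ (a / x) * (a + x) := by
        apply mul_le_mul_of_nonneg_right hrle (by linarith)
      have h2 : (a / x) * (a + x) ≤ 2 * a := by
        rw [div_mul_eq_mul_div, div_le_iff₀ hx]; nlinarith
      nlinarith
    · have habs : |a - x| = a - x := abs_of_nonneg (by linarith)
      have hrle : nrho m x k ≤ x / a := min_le_left _ _
      have : nrho m x k * (a + x) ≤ (x / a) * (a + x) := by
        apply mul_le_mul_of_nonneg_right hrle (by linarith)
      have h2 : (x / a) * (a + x) ≤ 2 * x := by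
        rw [div_mul_eq_mul_div, div_le_iff₀ hap]; nlinarith
      nlinarith
  calc |a - x| ≤ (1 - nrho m x k) * (a + x) := key
    _ ≤ Real.exp (-(nrho m x k)) * (a + x) := by
        apply mul_le_mul_of_nonneg_right h1 (by linarith)

lemma nFneg_le {m : ℕ} {x : ℝ} (hx : 0 < x) :
    |nF m (-x)| ≤ Real.exp (-(∑ k ∈ Finset.range m, nrho m x k)) * nF m x := by
  have h1 : |nF m (-x)| = ∏ k ∈ Finset.range m, |(nxi m) ^ k - x| := by
    rw [nF, Finset.abs_prod]
    apply Finset.prod_congr rfl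
    intro k _; rw [neg_add_eq_sub]
  rw [h1]
  have h2 : ∏ k ∈ Finset.range m, |(nxi m) ^ k - x| ≤
      ∏ k ∈ Finset.range m, (Real.exp (-(nrho m x k)) * ((nxi m) ^ k + x)) := by
    apply Finset.prod_le_prod
    · intro k _; exact abs_nonneg _
    · intro k _; exact factor_bound hx k
  refine h2.trans_eq ?_
  rw [Finset.prod_mul_distrib, ← Real.exp_sum, nF, ← Finset.sum_neg_distrib]
  congr 1
  exact Finset.prod_congr rfl fun k _ => by ring

lemma nq_pos {m : ℕ} {x : ℝ} (hm : 1 ≤ m) (hx0 : 0 ≤ x) (hx1 : x ≤ 1) :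
    0 < nF m x + nF m (-x) := by
  rcases eq_or_lt_of_le hx0 with h | hx
  · rw [← h, neg_zero]
    have := nF_pos (m := m) (le_refl (0:ℝ))
    linarith
  · have hF : 0 < nF m x := nF_pos hx0
    have hsum : x ≤ ∑ k ∈ Finset.range m, nrho m x k := by
      have h0 : nrho m x 0 = x := by
        rw [nrho, pow_zero, div_one]
        have : x ≤ 1 / x := by
          rw [le_div_iff₀ hx]; nlinarith
        exact min_eq_left this
      calc x = nrho m x 0 := h0.symm
        _ ≤ ∑ k ∈ Finset.range m, nrho m x k := by
            apply Finset.single_le_sum (fun k _ => nrho_nonneg hx k)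
            simp [Nat.pos_of_ne_zero, hm]
            omega
    have hlt : |nF m (-x)| < nF m x := by
      have h1 := nFneg_le (m := m) hx
      have h2 : Real.exp (-(∑ k ∈ Finset.range m, nrho m x k)) < 1 := by
        rw [Real.exp_lt_one_iff]; linarith
      calc |nF m (-x)| ≤ _ := h1
        _ < 1 * nF m x := by apply mul_lt_mul_of_pos_right h2 hF
        _ = nF m x := one_mul _
    have := abs_lt.1 hlt
    linarith [this.1]

lemma sum_nrho_ge {m : ℕ} {x : ℝ} (hm : 36 ≤ m) (hxl : (nxi m) ^ (m - 1) < x)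
    (hx1 : x ≤ 1) :
    Real.sqrt m / 8 ≤ ∑ k ∈ Finset.range m, nrho m x k := by
  classical
  set ξ := nxi m with hξdef
  have hξ0 : 0 < ξ := nxi_pos m
  have hξ1 : ξ ≤ 1 := nxi_le_one m
  have hx : 0 < x := lt_trans (pow_pos hξ0 _) hxl
  set s := Real.sqrt m with hsdef
  have hs0 : 0 ≤ s := Real.sqrt_nonneg _
  have hs6 : 6 ≤ s := by
    rw [hsdef, show (6:ℝ) = Real.sqrt 36 by
      rw [show (36:ℝ) = 6^2 by norm_num, Real.sqrt_sq (by norm_num)]]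
    exact Real.sqrt_le_sqrt (by exact_mod_cast hm)
  have hs2 : s ^ 2 = (m : ℝ) := Real.sq_sqrt (by positivity)
  set D := ⌈s⌉₊ with hDdef
  have hD1 : s ≤ (D : ℝ) := Nat.le_ceil s
  have hD2 : (D : ℝ) ≤ s + 1 := le_of_lt (Nat.ceil_lt_add_one hs0)
  have h2D : 2 * D ≤ m := by
    have : (2 * D : ℝ) ≤ (m : ℝ) := by
      push_cast; nlinarith
    exact_mod_cast this
  -- the pivot index j
  set P : ℕ → Prop := fun j => x ≤ ξ ^ j with hP
  have hP0 : P 0 := by simpa [hP] using hx1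
  set j := Nat.findGreatest P (m - 1) with hj
  have hjspec : x ≤ ξ ^ j := Nat.findGreatest_spec (Nat.zero_le _) hP0
  have hjle : j ≤ m - 1 := Nat.findGreatest_le _
  have hjne : j ≠ m - 1 := by
    intro h; rw [h] at hjspec; linarith
  have hjlt : j < m - 1 := lt_of_le_of_ne hjle hjne
  have hj4 : ξ ^ (j + 1) < x := by
    have := Nat.findGreatest_is_greatest (P := P)
      (show Nat.findGreatest P (m-1) < j + 1 by omega) (show j + 1 ≤ m - 1 by omega)
    simpa [hP, not_le] using this
  -- the index interval
  set a := if D ≤ j then j - D else j with ha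
  have haj : a ≤ j := by rw [ha]; split <;> omega
  have hja : j ≤ a + D := by rw [ha]; split <;> omega
  have haD : a + D ≤ m - 1 := by
    rw [ha]; split
    · omega
    · omega
  have hsub : Finset.Icc a (a + D) ⊆ Finset.range m := by
    intro k hk
    rw [Finset.mem_Icc] at hk
    rw [Finset.mem_range]
    omega
  have hξD1 : ξ ^ (D + 1) ≤ 1 := pow_le_one₀ hξ0.le hξ1
  -- per-index lower bound
  have hper : ∀ k ∈ Finset.Icc a (a + D), ξ ^ (D + 1) ≤ nrho m x k := by
    intro k hk
    rw [Finset.mem_Icc] at hk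
    apply le_min
    · -- ξ^{D+1} ≤ x / ξ^k
      rcases le_or_gt k j with hkj | hkj
      · have h1 : ξ ^ (D + 1) ≤ ξ ^ (j + 1 - k) :=
          pow_le_pow_of_le_one hξ0.le hξ1 (by omega)
        have h2 : ξ ^ (j + 1 - k) = ξ ^ (j + 1) / ξ ^ k := by
          rw [eq_div_iff (by positivity), ← pow_add]
          congr 1; omega
        calc ξ ^ (D+1) ≤ ξ ^ (j+1-k) := h1
          _ = ξ ^ (j+1) / ξ ^ k := h2
          _ ≤ x / ξ ^ k := by gcongr
      · have h1 : ξ ^ k ≤ x := by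
          calc ξ ^ k ≤ ξ ^ (j + 1) := pow_le_pow_of_le_one hξ0.le hξ1 (by omega)
            _ ≤ x := hj4.le
        calc ξ ^ (D+1) ≤ 1 := hξD1
          _ ≤ x / ξ ^ k := (one_le_div (pow_pos hξ0 k)).2 h1
    · -- ξ^{D+1} ≤ ξ^k / x
      rcases le_or_gt k j with hkj | hkj
      · have h1 : x ≤ ξ ^ k := by
          calc x ≤ ξ ^ j := hjspec
            _ ≤ ξ ^ k := pow_le_pow_of_le_one hξ0.le hξ1 hkj
        calc ξ ^ (D+1) ≤ 1 := hξD1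
          _ ≤ ξ ^ k / x := (one_le_div hx).2 h1
      · have h1 : ξ ^ (D + 1) ≤ ξ ^ (k - j) :=
          pow_le_pow_of_le_one hξ0.le hξ1 (by omega)
        have h2 : ξ ^ (k - j) = ξ ^ k / ξ ^ j := by
          rw [eq_div_iff (by positivity), ← pow_add]
          congr 1; omega
        have h3 : ξ ^ k / ξ ^ j ≤ ξ ^ k / x :=
          div_le_div_of_nonneg_left (by positivity) hx hjspec
        calc ξ ^ (D+1) ≤ ξ ^ (k-j) := h1
          _ = ξ ^ k / ξ ^ j := h2
          _ ≤ ξ ^ k / x := h3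
  -- conclude
  have hcard : (Finset.Icc a (a + D)).card = D + 1 := by
    rw [Nat.card_Icc]; omega
  have hlow : ((D:ℝ) + 1) * ξ ^ (D + 1) ≤ ∑ k ∈ Finset.Icc a (a + D), nrho m x k := by
    have h := Finset.card_nsmul_le_sum (Finset.Icc a (a + D)) (nrho m x) (ξ ^ (D+1)) hper
    rw [hcard] at h
    have : ((D:ℝ) + 1) * ξ ^ (D + 1) = (D + 1) • (ξ ^ (D+1)) := by
      rw [nsmul_eq_mul]; push_cast; ring
    rw [this]; exact h
  have hsubsum : ∑ k ∈ Finset.Icc a (a + D), nrho m x k ≤ ∑ k ∈ Finset.range m, nrho m x k :=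
    Finset.sum_le_sum_of_subset_of_nonneg hsub (fun k _ _ => nrho_nonneg hx k)
  have hξlow : (1:ℝ)/8 ≤ ξ ^ (D + 1) := by
    have he : ξ ^ (D + 1) = Real.exp (((D:ℝ) + 1) * (-(1 / s))) := by
      rw [hξdef, nxi, ← hsdef, ← Real.exp_nat_mul]
      push_cast; ring_nf
    have h2 : (-2 : ℝ) ≤ ((D:ℝ) + 1) * (-(1 / s)) := by
      have hs' : 0 < s := by linarith
      have h1s : ((D:ℝ) + 1) * (1 / s) ≤ 2 := by
        rw [mul_one_div, div_le_iff₀ hs']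
        nlinarith
      nlinarith
    have h8 : (1:ℝ)/8 ≤ Real.exp (-2) := by
      have he1 := Real.exp_one_lt_d9
      have he2 : Real.exp 2 = Real.exp 1 * Real.exp 1 := by
        rw [← Real.exp_add]; norm_num
      have hp := Real.exp_pos 1
      rw [Real.exp_neg, le_inv_comm₀ (by norm_num) (Real.exp_pos 2)]
      rw [he2]; nlinarith
    calc (1:ℝ)/8 ≤ Real.exp (-2) := h8
      _ ≤ Real.exp (((D:ℝ) + 1) * (-(1 / s))) := Real.exp_le_exp.2 h2
      _ = ξ ^ (D + 1) := he.symm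
  have hfin : s / 8 ≤ ((D:ℝ) + 1) * ξ ^ (D + 1) := by
    calc s / 8 = s * (1/8) := by ring
      _ ≤ ((D:ℝ) + 1) * ξ ^ (D + 1) :=
        mul_le_mul (by linarith) hξlow (by norm_num) (by positivity)
  linarith

lemma main_est {m : ℕ} {x : ℝ} (hm : 36 ≤ m) (hx0 : 0 ≤ x) (hx1 : x ≤ 1) :
    |x - (x * (nF m x - nF m (-x))) / (nF m x + nF m (-x))| ≤
      6 * Real.exp (-(Real.sqrt m / 8)) := by
  have hξ0 : 0 < nxi m := nxi_pos m
  have hξ1 : nxi m ≤ 1 := nxi_le_one m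
  set s := Real.sqrt m with hsdef
  have hs6 : 6 ≤ s := by
    rw [hsdef, show (6:ℝ) = Real.sqrt 36 by
      rw [show (36:ℝ) = 6^2 by norm_num, Real.sqrt_sq (by norm_num)]]
    exact Real.sqrt_le_sqrt (by exact_mod_cast hm)
  have hs2 : s ^ 2 = (m : ℝ) := Real.sq_sqrt (by positivity)
  have hq : 0 < nF m x + nF m (-x) := nq_pos (by omega) hx0 hx1
  have hF : 0 < nF m x := nF_pos hx0
  have key : x - (x * (nF m x - nF m (-x))) / (nF m x + nF m (-x)) =
      2 * x * nF m (-x) / (nF m x + nF m (-x)) := by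
    field_simp
    ring
  rw [key]
  have hxim1 : nxi m ^ (m - 1) = Real.exp (-(((m:ℝ) - 1) / s)) := by
    rw [nxi, ← hsdef, ← Real.exp_nat_mul]
    congr 1
    have : ((m - 1 : ℕ) : ℝ) = (m : ℝ) - 1 := by
      have : 1 ≤ m := by omega
      push_cast [this]; ring
    rw [this]; ring
  have hexp_m1 : Real.exp (-(((m:ℝ) - 1) / s)) ≤ Real.exp (-(s / 8)) := by
    apply Real.exp_le_exp.2
    rw [neg_le_neg_iff]
    rw [div_le_div_iff₀ (by norm_num) (by linarith)]
    nlinarith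
  rcases le_or_gt x (nxi m ^ (m - 1)) with hxa | hxb
  · -- case A : small x
    have hFneg : 0 ≤ nF m (-x) := by
      apply Finset.prod_nonneg
      intro k hk
      rw [Finset.mem_range] at hk
      have : nxi m ^ (m - 1) ≤ nxi m ^ k :=
        pow_le_pow_of_le_one hξ0.le hξ1 (by omega)
      linarith
    have h1 : 2 * x * nF m (-x) / (nF m x + nF m (-x)) ≤ 2 * x := by
      rw [div_le_iff₀ hq]
      nlinarith
    have h2 : 0 ≤ 2 * x * nF m (-x) / (nF m x + nF m (-x)) := by positivity
    rw [abs_of_nonneg h2]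
    calc 2 * x * nF m (-x) / (nF m x + nF m (-x)) ≤ 2 * x := h1
      _ ≤ 2 * Real.exp (-(((m:ℝ) - 1) / s)) := by rw [← hxim1]; linarith
      _ ≤ 2 * Real.exp (-(s / 8)) := by linarith [hexp_m1]
      _ ≤ 6 * Real.exp (-(s / 8)) := by
          have := Real.exp_pos (-(s/8)); linarith
  · -- case B : x ∈ (ξ^(m-1), 1]
    have hx : 0 < x := lt_trans (pow_pos hξ0 _) hxb
    set Srho := ∑ k ∈ Finset.range m, nrho m x k with hSrho
    have hsum : s / 8 ≤ Srho := sum_nrho_ge hm hxb hx1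
    have ht : Real.exp (-Srho) ≤ Real.exp (-(s/8)) := Real.exp_le_exp.2 (by linarith)
    have hu2 : Real.exp (-(s/8)) ≤ 1/2 := by
      have hl2 := Real.log_two_lt_d9
      have : Real.exp (-(s/8)) ≤ Real.exp (-Real.log 2) := by
        apply Real.exp_le_exp.2
        have : Real.log 2 < 0.6931471808 := hl2
        linarith
      have h3 : Real.exp (-Real.log 2) = 1/2 := by
        rw [Real.exp_neg, Real.exp_log (by norm_num : (0:ℝ) < 2)]
        norm_num
      rw [h3] at this
      exact this
    have hFneg : |nF m (-x)| ≤ Real.exp (-(s/8)) * nF m x := by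
      calc |nF m (-x)| ≤ Real.exp (-Srho) * nF m x := nFneg_le hx
        _ ≤ Real.exp (-(s/8)) * nF m x := by
            apply mul_le_mul_of_nonneg_right ht hF.le
    have hqlow : nF m x / 2 ≤ nF m x + nF m (-x) := by
      have h1 : -(nF m (-x)) ≤ |nF m (-x)| := neg_le_abs _
      have h2 : |nF m (-x)| ≤ (1/2) * nF m x := by
        calc |nF m (-x)| ≤ Real.exp (-(s/8)) * nF m x := hFneg
          _ ≤ (1/2) * nF m x := mul_le_mul_of_nonneg_right hu2 hF.le
      linarith
    have habs : |2 * x * nF m (-x) / (nF m x + nF m (-x))| =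
        2 * x * |nF m (-x)| / (nF m x + nF m (-x)) := by
      rw [abs_div, abs_of_pos hq, abs_mul, abs_mul]
      rw [abs_of_nonneg hx0, abs_of_nonneg (by norm_num : (0:ℝ) ≤ 2)]
    rw [habs]
    have hnum : 2 * x * |nF m (-x)| ≤ 2 * Real.exp (-(s/8)) * nF m x := by
      have h1 : 2 * x * |nF m (-x)| ≤ 2 * 1 * |nF m (-x)| := by
        apply mul_le_mul_of_nonneg_right ?_ (abs_nonneg _)
        linarith
      calc 2 * x * |nF m (-x)| ≤ 2 * |nF m (-x)| := by linarith
        _ ≤ 2 * (Real.exp (-(s/8)) * nF m x) := by linarith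
        _ = 2 * Real.exp (-(s/8)) * nF m x := by ring
    calc 2 * x * |nF m (-x)| / (nF m x + nF m (-x)) ≤
        (2 * Real.exp (-(s/8)) * nF m x) / (nF m x / 2) := by
          apply div_le_div₀ (by positivity) hnum (by positivity) hqlow
      _ = 4 * Real.exp (-(s/8)) := by field_simp; ring
      _ ≤ 6 * Real.exp (-(s/8)) := by
          have := Real.exp_pos (-(s/8)); linarith

noncomputable def nP (m : ℕ) : Polynomial ℝ :=
  ∏ k ∈ Finset.range m, (Polynomial.X + Polynomial.C ((nxi m) ^ k))

lemma nP_eval (m : ℕ) (x : ℝ) : (nP m).eval x = nF m x := by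
  simp [nP, nF, Polynomial.eval_prod]

noncomputable def nQ (m : ℕ) : Polynomial ℝ := nP m + (nP m).comp (-Polynomial.X)

noncomputable def nPP (m : ℕ) : Polynomial ℝ :=
  Polynomial.X * (nP m - (nP m).comp (-Polynomial.X))

lemma comp_eval (m : ℕ) (x : ℝ) : ((nP m).comp (-Polynomial.X)).eval x = nF m (-x) := by
  rw [Polynomial.eval_comp]
  simp [nP_eval]

lemma nQ_eval (m : ℕ) (x : ℝ) : (nQ m).eval x = nF m x + nF m (-x) := by
  simp [nQ, nP_eval, comp_eval]

lemma nPP_eval (m : ℕ) (x : ℝ) : (nPP m).eval x = x * (nF m x - nF m (-x)) := by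
  simp [nPP, nP_eval, comp_eval]

lemma nP_deg (m : ℕ) : (nP m).natDegree ≤ m := by
  refine le_trans (Polynomial.natDegree_prod_le _ _) ?_
  have : ∀ k ∈ Finset.range m, (Polynomial.X + Polynomial.C ((nxi m) ^ k)).natDegree = 1 :=
    fun k _ => Polynomial.natDegree_X_add_C _
  rw [Finset.sum_congr rfl this]
  simp

lemma nPcomp_deg (m : ℕ) : ((nP m).comp (-Polynomial.X)).natDegree ≤ m := by
  refine le_trans (Polynomial.natDegree_comp_le) ?_
  have h1 : (-Polynomial.X : Polynomial ℝ).natDegree = 1 := by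
    rw [Polynomial.natDegree_neg, Polynomial.natDegree_X]
  rw [h1, mul_one]
  exact nP_deg m

lemma nQ_deg (m : ℕ) : (nQ m).natDegree ≤ m := by
  refine le_trans (Polynomial.natDegree_add_le _ _) ?_
  exact max_le (nP_deg m) (nPcomp_deg m)

lemma nPP_deg (m : ℕ) : (nPP m).natDegree ≤ m + 1 := by
  refine le_trans (Polynomial.natDegree_mul_le) ?_
  have h1 : (Polynomial.X : Polynomial ℝ).natDegree = 1 := Polynomial.natDegree_X
  have h2 : (nP m - (nP m).comp (-Polynomial.X)).natDegree ≤ m :=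
    le_trans (Polynomial.natDegree_sub_le _ _) (max_le (nP_deg m) (nPcomp_deg m))
  omega

lemma nq_pos' {m : ℕ} (hm : 1 ≤ m) {x : ℝ} (hx : x ∈ Set.Icc (-1:ℝ) 1) :
    0 < nF m x + nF m (-x) := by
  obtain ⟨h1, h2⟩ := hx
  rcases le_total 0 x with h | h
  · exact nq_pos hm h h2
  · have := nq_pos hm (by linarith : (0:ℝ) ≤ -x) (by linarith)
    rw [neg_neg] at this
    linarith


/-- Newman's theorem: there is a constant `C > 0` such that for every `n ≥ 1` there is a rational
function `r_n = p/q` of type `(n, n)` with real coefficients (with `q` zero-free on `[−1,1]`)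
satisfying `sup_{x ∈ [−1,1]} ||x| − r_n(x)| = O(e^{−C√n})`: rational approximation to `|x|` on
`[−1,1]` achieves root-exponential convergence. -/
theorem newman_rational_approximation_abs :
    ∃ C : ℝ, 0 < C ∧ ∃ M : ℝ, ∀ n : ℕ, 1 ≤ n →
      ∃ p q : Polynomial ℝ, p.natDegree ≤ n ∧ q.natDegree ≤ n ∧
        (∀ x ∈ Set.Icc (-1 : ℝ) 1, Polynomial.eval x q ≠ 0) ∧
        ∀ x ∈ Set.Icc (-1 : ℝ) 1,
          |(|x| - Polynomial.eval x p / Polynomial.eval x q)| ≤ M * Real.exp (-C * Real.sqrt n) := by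
  refine ⟨1/16, by norm_num, 10, ?_⟩
  intro n hn
  by_cases hn36 : n ≤ 36
  · refine ⟨0, 1, by simp, by simp, fun x _ => by simp, fun x hx => ?_⟩
    obtain ⟨h1, h2⟩ := hx
    have hax : |x| ≤ 1 := abs_le.2 ⟨h1, h2⟩
    have hsn : Real.sqrt n ≤ 6 := by
      rw [show (6:ℝ) = Real.sqrt 36 by
        rw [show (36:ℝ) = 6^2 by norm_num, Real.sqrt_sq (by norm_num)]]
      exact Real.sqrt_le_sqrt (by exact_mod_cast hn36)
    have hexp : (5/8 : ℝ) ≤ Real.exp (-(1/16) * Real.sqrt n) := by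
      have h3 : (-(3/8) : ℝ) ≤ -(1/16) * Real.sqrt n := by nlinarith [Real.sqrt_nonneg (n:ℝ)]
      calc (5/8 : ℝ) = (-(3/8)) + 1 := by norm_num
        _ ≤ Real.exp (-(3/8)) := Real.add_one_le_exp _
        _ ≤ Real.exp (-(1/16) * Real.sqrt n) := Real.exp_le_exp.2 h3
    simp only [Polynomial.eval_zero, Polynomial.eval_one, zero_div, sub_zero]
    rw [abs_abs]
    calc |x| ≤ 1 := hax
      _ ≤ 10 * Real.exp (-(1/16) * Real.sqrt n) := by linarith
  · push_neg at hn36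
    set m := n - 1 with hmdef
    have hm : 36 ≤ m := by omega
    have hmn : m + 1 = n := by omega
    refine ⟨nPP m, nQ m, ?_, ?_, ?_, ?_⟩
    · rw [← hmn]; exact nPP_deg m
    · exact le_trans (nQ_deg m) (by omega)
    · intro x hx
      rw [nQ_eval]
      exact ne_of_gt (nq_pos' (by omega) hx)
    · intro x hx
      obtain ⟨h1, h2⟩ := hx
      -- reduce to y = |x| ∈ [0,1]
      have key : ∀ y : ℝ, 0 ≤ y → y ≤ 1 →
          |(y - Polynomial.eval y (nPP m) / Polynomial.eval y (nQ m))| ≤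
            6 * Real.exp (-(Real.sqrt m / 8)) := by
        intro y hy0 hy1
        rw [nPP_eval, nQ_eval]
        exact main_est hm hy0 hy1
      have heq : |(|x| - Polynomial.eval x (nPP m) / Polynomial.eval x (nQ m))| =
          |(|x| - Polynomial.eval |x| (nPP m) / Polynomial.eval |x| (nQ m))| := by
        rcases le_total 0 x with h | h
        · rw [abs_of_nonneg h]
        · rw [abs_of_nonpos h, nPP_eval, nQ_eval, nPP_eval, nQ_eval, neg_neg]
          ring_nf
      have hb : |(|x| - Polynomial.eval |x| (nPP m) / Polynomial.eval |x| (nQ m))| ≤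
          6 * Real.exp (-(Real.sqrt m / 8)) :=
        key |x| (abs_nonneg x) (abs_le.2 ⟨h1, h2⟩)
      rw [heq]
      refine hb.trans ?_
      -- 6 exp(-√m/8) ≤ 10 exp(-√n/16)
      have hsm : Real.sqrt n ≤ 2 * Real.sqrt m := by
        have h4 : (n : ℝ) ≤ 4 * m := by
          have : n ≤ 4 * m := by omega
          exact_mod_cast this
        calc Real.sqrt n ≤ Real.sqrt (4 * m) := Real.sqrt_le_sqrt h4
          _ = 2 * Real.sqrt m := by
            rw [show (4:ℝ) * m = 2^2 * m by ring, Real.sqrt_mul (by positivity),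
              Real.sqrt_sq (by norm_num)]
      have hexp : Real.exp (-(Real.sqrt m / 8)) ≤ Real.exp (-(1/16) * Real.sqrt n) := by
        apply Real.exp_le_exp.2
        nlinarith
      have := Real.exp_pos (-(1/16) * Real.sqrt n)
      have h6 := Real.exp_pos (-(Real.sqrt m / 8))
      nlinarith
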